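/- Let n, m be natural numbers, let A_0, A_1, ..., A_m be real symmetric n×n matrices, b_0, ..., b_m ∈ ℝ^n and c_0, ..., c_m ∈ ℝ. Define f_i(x) = xᵀA_i x + 2 b_iᵀ x, f̄_i(x) = xᵀA_i x for x ∈ ℝ^n, and g_i(x,t) = xᵀA_i x + 2 t b_iᵀ x + 2 c_i t² for (x,t) ∈ ℝ^n × ℝ. Set F(x) = (f_0(x), ..., f_m(x)), F̄(x) = (f̄_0(x), ..., f̄_m(x)) and G(x,t) = (g_0(x,t), ..., g_m(x,t)). If the images F(ℝ^n) ⊆ ℝ^{m+1} and F̄(ℝ^n) ⊆ ℝ^{m+1} are both convex sets, then the image G(ℝ^{n+1}) ⊆ ℝ^{m+1} is a convex set. -/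

import Mathlib

open Matrix Set

/-- Lemma 1, convexity of images of quadratic maps.
If the images of `F(x) = (xᵀAᵢx + 2bᵢᵀx)ᵢ` and `F̄(x) = (xᵀAᵢx)ᵢ` are convex, then the
image of the homogenized map `G(x,t) = (xᵀAᵢx + 2t bᵢᵀx + 2cᵢ t²)ᵢ` is convex. -/
theorem convexity_of_homogenized_image (n m : ℕ)
    (A : Fin (m + 1) → Matrix (Fin n) (Fin n) ℝ)
    (b : Fin (m + 1) → (Fin n → ℝ)) (c : Fin (m + 1) → ℝ)
    (hA : ∀ i, (A i).IsSymm)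
    (hF : Convex ℝ (Set.range (fun (x : Fin n → ℝ) (i : Fin (m + 1)) =>
      (x ⬝ᵥ ((A i) *ᵥ x) + 2 * ((b i) ⬝ᵥ x) : ℝ))))
    (hFbar : Convex ℝ (Set.range (fun (x : Fin n → ℝ) (i : Fin (m + 1)) =>
      (x ⬝ᵥ ((A i) *ᵥ x) : ℝ)))) :
    Convex ℝ (Set.range (fun (p : (Fin n → ℝ) × ℝ) (i : Fin (m + 1)) =>
      (p.1 ⬝ᵥ ((A i) *ᵥ p.1) + 2 * p.2 * ((b i) ⬝ᵥ p.1) + 2 * c i * p.2 ^ 2 : ℝ))) := by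
  set F : (Fin n → ℝ) → Fin (m + 1) → ℝ :=
    fun x i => x ⬝ᵥ (A i *ᵥ x) + 2 * (b i ⬝ᵥ x) with hFdef
  set Fb : (Fin n → ℝ) → Fin (m + 1) → ℝ :=
    fun x i => x ⬝ᵥ (A i *ᵥ x) with hFbdef
  set G : ((Fin n → ℝ) × ℝ) → Fin (m + 1) → ℝ :=
    fun p i => p.1 ⬝ᵥ (A i *ᵥ p.1) + 2 * p.2 * (b i ⬝ᵥ p.1) + 2 * c i * p.2 ^ 2 with hGdef
  set C : Fin (m + 1) → ℝ := fun i => 2 * c i with hCdef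
  -- scaling for Fb
  have hFbscale : ∀ (t : ℝ) (x : Fin n → ℝ), Fb (t • x) = (t ^ 2) • Fb x := by
    intro t x
    funext i
    simp only [hFbdef, Pi.smul_apply, smul_eq_mul, mulVec_smul, dotProduct_smul,
      smul_dotProduct]
    ring
  -- homogenization identity
  have hGscale : ∀ (t : ℝ) (x : Fin n → ℝ), G (t • x, t) = (t ^ 2) • (F x + C) := by
    intro t x
    funext i
    simp only [hGdef, hFdef, hCdef, Pi.smul_apply, Pi.add_apply, smul_eq_mul, mulVec_smul,
      dotProduct_smul, smul_dotProduct]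
    ring
  have hGzero : ∀ x : Fin n → ℝ, G (x, 0) = Fb x := by
    intro x
    funext i
    simp [hGdef, hFbdef]
  -- elements of range Fb are in range G
  have memG1 : ∀ x, Fb x ∈ Set.range G := fun x => ⟨(x, 0), hGzero x⟩
  -- nonneg scalings of F x + C are in range G
  have memG2 : ∀ (s : ℝ) (x : Fin n → ℝ), 0 ≤ s → s • (F x + C) ∈ Set.range G := by
    intro s x hs
    refine ⟨(Real.sqrt s • x, Real.sqrt s), ?_⟩
    rw [hGscale, Real.sq_sqrt hs]
  -- nonneg scalings of Fb-elements are Fb-elements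
  have hFbcone : ∀ (s : ℝ) (z : Fin n → ℝ), 0 ≤ s → ∃ w, s • Fb z = Fb w := by
    intro s z hs
    exact ⟨Real.sqrt s • z, by rw [hFbscale, Real.sq_sqrt hs]⟩
  -- key lemma: F x + Fb z ∈ range F
  have key : ∀ (x z : Fin n → ℝ), ∃ w, F x + Fb z = F w := by
    intro x z
    have h : (1/2 : ℝ) • F (x + z) + (1/2 : ℝ) • F (x - z) ∈ Set.range F :=
      hF (mem_range_self (x + z)) (mem_range_self (x - z)) (by norm_num) (by norm_num)
        (by norm_num)
    obtain ⟨w, hw⟩ := h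
    refine ⟨w, ?_⟩
    rw [hw]
    funext i
    simp only [hFdef, hFbdef, Pi.add_apply, Pi.smul_apply, smul_eq_mul, mulVec_add,
      mulVec_sub, dotProduct_add, dotProduct_sub, add_dotProduct, sub_dotProduct]
    ring
  -- mixed combination lemma
  have mixed : ∀ (a d s : ℝ) (x z : Fin n → ℝ), 0 ≤ a → 0 ≤ d → a + d = 1 → 0 ≤ s →
      a • (s • (F x + C)) + d • Fb z ∈ Set.range G := by
    intro a d s x z ha hd had hs
    rcases eq_or_lt_of_le (mul_nonneg ha hs) with h0 | hpos
    · -- a * s = 0 : the first term vanishes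
      have h1 : a • (s • (F x + C)) = (0 : Fin (m + 1) → ℝ) := by
        rw [smul_smul, ← h0, zero_smul]
      obtain ⟨w, hw⟩ := hFbcone d z hd
      rw [h1, zero_add, hw]
      exact memG1 w
    · -- a * s > 0 : fold the Fb-part into the F-part
      obtain ⟨w, hw⟩ := hFbcone (d / (a * s)) z (div_nonneg hd hpos.le)
      obtain ⟨v, hv⟩ := key x w
      have : a • (s • (F x + C)) + d • Fb z = (a * s) • (F v + C) := by
        rw [← hv, ← hw]
        funext i
        simp only [Pi.add_apply, Pi.smul_apply, smul_eq_mul]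
        have ha0 : a ≠ 0 := by rintro rfl; simp at hpos
        have hs0 : s ≠ 0 := by rintro rfl; simp at hpos
        field_simp
        ring
      rw [this]
      exact memG2 (a * s) v (mul_nonneg ha hs)
  -- canonical form of elements of range G
  have rep : ∀ p : (Fin n → ℝ) × ℝ,
      (∃ x, G p = Fb x) ∨ (∃ (s : ℝ) (x : Fin n → ℝ), 0 ≤ s ∧ G p = s • (F x + C)) := by
    rintro ⟨x, t⟩
    by_cases ht : t = 0
    · exact Or.inl ⟨x, by rw [ht]; exact hGzero x⟩
    · refine Or.inr ⟨t ^ 2, t⁻¹ • x, sq_nonneg t, ?_⟩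
      have hx : (x, t) = (t • (t⁻¹ • x), t) := by
        rw [smul_smul, mul_inv_cancel₀ ht, one_smul]
      rw [hx, hGscale]
  -- main convexity argument
  rintro z1 ⟨p1, rfl⟩ z2 ⟨p2, rfl⟩ a d ha hd had
  rcases rep p1 with ⟨x1, h1⟩ | ⟨s1, x1, hs1, h1⟩ <;>
    rcases rep p2 with ⟨x2, h2⟩ | ⟨s2, x2, hs2, h2⟩
  · -- both Fb
    rw [h1, h2]
    obtain ⟨w, hw⟩ := hFbar (mem_range_self x1) (mem_range_self x2) ha hd had
    rw [← hw]
    exact memG1 w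
  · -- Fb and cone: use mixed with addition commuted
    rw [h1, h2]
    have := mixed d a s2 x2 x1 hd ha (by linarith) hs2
    have e : a • Fb x1 + d • (s2 • (F x2 + C)) = d • (s2 • (F x2 + C)) + a • Fb x1 :=
      add_comm _ _
    rw [e]
    exact this
  · -- cone and Fb
    rw [h1, h2]
    exact mixed a d s1 x1 x2 ha hd had hs1
  · -- both cone
    rw [h1, h2]
    set σ : ℝ := a * s1 + d * s2 with hσdef
    have hσ : 0 ≤ σ := by positivity
    rcases eq_or_lt_of_le hσ with h0 | hpos
    · -- σ = 0 : both terms vanish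
      have e1 : a * s1 = 0 := by nlinarith [mul_nonneg ha hs1, mul_nonneg hd hs2]
      have e2 : d * s2 = 0 := by nlinarith [mul_nonneg ha hs1, mul_nonneg hd hs2]
      have : a • (s1 • (F x1 + C)) + d • (s2 • (F x2 + C)) = (0 : Fin (m+1) → ℝ) • (F 0 + C) := by
        rw [smul_smul, smul_smul, e1, e2]
        simp
      rw [this]
      exact memG2 0 0 le_rfl
    · -- σ > 0 : convex combination inside the cone
      have hc1 : 0 ≤ a * s1 / σ := by positivity
      have hc2 : 0 ≤ d * s2 / σ := by positivity
      have hcs : a * s1 / σ + d * s2 / σ = 1 := by rw [← add_div]; exact div_self hpos.ne'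
      obtain ⟨w, hw⟩ := hF (mem_range_self x1) (mem_range_self x2) hc1 hc2 hcs
      have : a • (s1 • (F x1 + C)) + d • (s2 • (F x2 + C)) = σ • (F w + C) := by
        rw [hw]
        funext i
        simp only [Pi.add_apply, Pi.smul_apply, smul_eq_mul]
        field_simp
        ring
      rw [this]
      exact memG2 σ w hσ
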